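/- Let π: (X, μ) → (Y, ν) be a factor of probability spaces, and let f ∈ L²(X) be non-zero. Then for every ε > 0 there exists g of the form g = h·f with h ∈ L^∞(Y) such that E(|g|²|Y) = 1_E for some non-null measurable set E ⊆ Y, and ‖f − E(f ḡ|Y)·g‖_{L²(X)} < ε. -/

import Mathlib

open MeasureTheory Filter
open scoped ENNReal Topology

lemma integral_ofReal'' {X : Type*} {mX : MeasurableSpace X} (μ : Measure X) (f : X → ℝ) :
    ∫ x, (f x : ℂ) ∂μ = ((∫ x, f x ∂μ : ℝ) : ℂ) := integral_ofReal

lemma condexp_ofReal' {Ω : Type*} {m0 : MeasurableSpace Ω} {μ : Measure Ω} [IsFiniteMeasure μ]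
    {m : MeasurableSpace Ω} (hm : m ≤ m0) {u : Ω → ℝ} (hu : Integrable u μ) :
    (μ[fun ω => (u ω : ℂ)|m]) =ᵐ[μ] fun ω => ((μ[u|m]) ω : ℂ) := by
  have h1 : Integrable (fun ω => (u ω : ℂ)) μ := hu.ofReal
  have h2 : Integrable (fun ω => ((μ[u|m]) ω : ℂ)) μ := Integrable.ofReal integrable_condExp
  refine (ae_eq_condExp_of_forall_setIntegral_eq hm h1
    (fun s _ _ => h2.mono_measure Measure.restrict_le_self)
    (fun s hs hμs => ?_) ?_).symm
  · rw [@integral_ofReal'' Ω m0 (μ.restrict s) (μ[u|m]),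
      @integral_ofReal'' Ω m0 (μ.restrict s) u, setIntegral_condExp hm hu hs]
  · exact StronglyMeasurable.aestronglyMeasurable (Complex.continuous_ofReal.comp_stronglyMeasurable
      stronglyMeasurable_condExp)

lemma integral_indicator' {X : Type*} {mX : MeasurableSpace X} (μ : Measure X) {s : Set X}
    (hs : MeasurableSet s) (f : X → ℝ) :
    ∫ x, s.indicator f x ∂μ = ∫ x in s, f x ∂μ := integral_indicator hs

lemma integral_add_compl' {X : Type*} {mX : MeasurableSpace X} {μ : Measure X} {s : Set X}
    (hs : MeasurableSet s) {f : X → ℝ} (hf : Integrable f μ) :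
    ∫ x in s, f x ∂μ + ∫ x in sᶜ, f x ∂μ = ∫ x, f x ∂μ := integral_add_compl hs hf

theorem conditional_normalization
    {Ω : Type*} {m0 : MeasurableSpace Ω} {μ : Measure Ω} [IsProbabilityMeasure μ]
    (G : MeasurableSpace Ω) (hG : G ≤ m0)
    (f : Ω → ℂ) (hf : MemLp f 2 μ) (hf0 : ¬ f =ᵐ[μ] 0)
    (ε : ℝ) (hε : 0 < ε) :
    ∃ h : Ω → ℂ, Measurable[G] h ∧ (∃ C : ℝ, ∀ ω, ‖h ω‖ ≤ C) ∧
      ∃ E : Set Ω, MeasurableSet[G] E ∧ μ E ≠ 0 ∧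
        (μ[fun ω => ‖h ω * f ω‖ ^ 2|G]) =ᵐ[μ] E.indicator (fun _ => (1 : ℝ)) ∧
        eLpNorm (fun ω => f ω -
            (μ[fun ω' => f ω' * (starRingEnd ℂ) (h ω' * f ω')|G]) ω * (h ω * f ω)) 2 μ
          < ENNReal.ofReal ε := by
  -- notation
  set nsq : Ω → ℝ := fun ω => ‖f ω‖ ^ 2 with hnsq_def
  have hnsq_int : Integrable nsq μ := by
    have h := hf.integrable_norm_rpow two_ne_zero ENNReal.ofNat_ne_top
    simpa [nsq, ENNReal.toReal_ofNat, Real.rpow_natCast] using h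
  have hint_pos : 0 < ∫ ω, nsq ω ∂μ := by
    rcases (integral_nonneg (f := nsq) (fun ω => (by positivity : 0 ≤ nsq ω))).lt_or_eq with h | h
    · exact h
    · exfalso
      apply hf0
      have := (integral_eq_zero_iff_of_nonneg (fun ω => by positivity) hnsq_int).mp h.symm
      filter_upwards [this] with ω hω
      simpa [nsq] using hω
  set φ : Ω → ℝ := μ[nsq|G] with hφ_def
  have hφ_sm : StronglyMeasurable[G] φ := stronglyMeasurable_condExp
  have hφ_int : Integrable φ μ := integrable_condExp
  have hφ_nonneg : 0 ≤ᵐ[μ] φ := condExp_nonneg (ae_of_all _ fun ω => by positivity)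
  -- the bad sets
  set S : ℕ → Set Ω := fun n => {ω | φ ω < ((n:ℝ)+1)⁻¹ ∨ (n:ℝ) < φ ω} with hS_def
  have hSmG : ∀ n : ℕ, MeasurableSet[G] (S n) := by
    intro n
    show MeasurableSet[G] {ω | φ ω < ((n:ℝ)+1)⁻¹ ∨ (n:ℝ) < φ ω}
    rw [Set.setOf_or]
    exact MeasurableSet.union (hφ_sm.measurable measurableSet_Iio)
      (hφ_sm.measurable measurableSet_Ioi)
  have hSm : ∀ n : ℕ, MeasurableSet[m0] (S n) := fun n => hG _ (hSmG n)
  -- the integrals over the bad sets tend to 0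
  have h_tendsto : Tendsto (fun n : ℕ => ∫ ω, (S n).indicator φ ω ∂μ) atTop (𝓝 0) := by
    have := tendsto_integral_of_dominated_convergence (F := fun n : ℕ => (S n).indicator φ)
        (f := fun _ => (0:ℝ)) (bound := fun ω => |φ ω|)
        (fun n => ((hφ_sm.mono hG).indicator (hSm n)).aestronglyMeasurable)
        hφ_int.abs
        (fun n => ae_of_all _ fun ω => ?_) ?_
    · simpa using this
    · by_cases hω : ω ∈ S n
      · simp [Set.indicator_of_mem hω, abs_abs, le_abs_self, abs_nonneg]
      · simp [Set.indicator_of_notMem hω, abs_nonneg]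
    · filter_upwards [hφ_nonneg] with ω hω
      rcases hω.lt_or_eq with hpos | hzero
      · have h1 : ∃ N : ℕ, 1 / φ ω ≤ N ∧ φ ω ≤ N := by
          obtain ⟨N1, hN1⟩ := exists_nat_ge (1 / φ ω)
          obtain ⟨N2, hN2⟩ := exists_nat_ge (φ ω)
          exact ⟨max N1 N2, hN1.trans (by exact_mod_cast Nat.le_max_left _ _),
            hN2.trans (by exact_mod_cast Nat.le_max_right _ _)⟩
        obtain ⟨N, hN1, hN2⟩ := h1
        refine tendsto_const_nhds.congr' ?_
        filter_upwards [eventually_ge_atTop N] with n hn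
        have hnn : (N:ℝ) ≤ n := by exact_mod_cast hn
        have hmem : ω ∉ S n := by
          simp only [hS_def, Set.mem_setOf_eq, not_or, not_lt]
          constructor
          · rw [inv_le_comm₀ (by positivity) hpos]
            calc (φ ω)⁻¹ = 1 / φ ω := (one_div _).symm
              _ ≤ N := hN1
              _ ≤ (n:ℝ) + 1 := by linarith
          · exact hN2.trans hnn
        rw [Set.indicator_of_notMem hmem]
      · have hmem : ∀ n : ℕ, ω ∈ S n := fun n =>
          Or.inl (by rw [← hzero]; positivity)
        refine tendsto_const_nhds.congr fun n => ?_
        rw [Set.indicator_of_mem (hmem n), ← hzero]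
        rfl
  -- choose n
  have hpos' : (0:ℝ) < min (ε ^ 2) (∫ ω, nsq ω ∂μ) := lt_min (by positivity) hint_pos
  obtain ⟨n, hn⟩ : ∃ n : ℕ, ∫ ω, (S n).indicator φ ω ∂μ < min (ε ^ 2) (∫ ω, nsq ω ∂μ) :=
    (h_tendsto.eventually_lt_const hpos').exists
  -- the good set and the normalizing function
  set E : Set Ω := (S n)ᶜ with hE_def
  have hE_G : MeasurableSet[G] E := (hSmG n).compl
  have hE_m0 : MeasurableSet[m0] E := hG _ hE_G
  have hE_mem : ∀ ω, ω ∈ E ↔ (((n:ℝ)+1)⁻¹ ≤ φ ω ∧ φ ω ≤ n) := by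
    intro ω
    simp [hE_def, hS_def, not_or, not_lt]
  have hφposE : ∀ ω ∈ E, 0 < φ ω := fun ω hω =>
    lt_of_lt_of_le (by positivity) ((hE_mem ω).mp hω).1
  set r : Ω → ℝ := E.indicator fun ω => (Real.sqrt (φ ω))⁻¹ with hr_def
  have hr_measG : Measurable[G] r :=
    Measurable.indicator (Measurable.inv (hφ_sm.measurable.sqrt)) hE_G
  have hr_smG : StronglyMeasurable[G] r := hr_measG.stronglyMeasurable
  have hr_nonneg : ∀ ω, 0 ≤ r ω := by
    intro ω
    by_cases hω : ω ∈ E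
    · rw [hr_def, Set.indicator_of_mem hω]; positivity
    · rw [hr_def, Set.indicator_of_notMem hω]
  have hr_bound : ∀ ω, |r ω| ≤ Real.sqrt ((n:ℝ)+1) := by
    intro ω
    rw [abs_of_nonneg (hr_nonneg ω)]
    by_cases hω : ω ∈ E
    · rw [hr_def, Set.indicator_of_mem hω]
      have h1 : ((n:ℝ)+1)⁻¹ ≤ φ ω := ((hE_mem ω).mp hω).1
      have h2 : (Real.sqrt ((n:ℝ)+1))⁻¹ ≤ Real.sqrt (φ ω) := by
        rw [← Real.sqrt_inv]
        exact Real.sqrt_le_sqrt h1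
      have h3 : (0:ℝ) < (Real.sqrt ((n:ℝ)+1))⁻¹ := by positivity
      calc (Real.sqrt (φ ω))⁻¹ ≤ ((Real.sqrt ((n:ℝ)+1))⁻¹)⁻¹ :=
            inv_anti₀ h3 h2
        _ = Real.sqrt ((n:ℝ)+1) := inv_inv _
    · rw [hr_def, Set.indicator_of_notMem hω]; positivity
  have hrsq : ∀ ω, r ω ^ 2 = E.indicator (fun ω => (φ ω)⁻¹) ω := by
    intro ω
    by_cases hω : ω ∈ E
    · rw [hr_def, Set.indicator_of_mem hω, Set.indicator_of_mem hω, ← Real.sqrt_inv,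
        Real.sq_sqrt (inv_nonneg.mpr (hφposE ω hω).le)]
    · rw [hr_def, Set.indicator_of_notMem hω, Set.indicator_of_notMem hω]
      ring
  have hrsqφ : ∀ ω, r ω ^ 2 * φ ω = E.indicator (fun _ => (1:ℝ)) ω := by
    intro ω
    rw [hrsq ω]
    by_cases hω : ω ∈ E
    · rw [Set.indicator_of_mem hω, Set.indicator_of_mem hω,
        inv_mul_cancel₀ (hφposE ω hω).ne']
    · rw [Set.indicator_of_notMem hω, Set.indicator_of_notMem hω, zero_mul]
  refine ⟨fun ω => (r ω : ℂ), Complex.measurable_ofReal.comp hr_measG,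
    ⟨Real.sqrt ((n:ℝ)+1), fun ω => by simpa using hr_bound ω⟩, E, hE_G, ?_, ?_, ?_⟩
  · -- μ E ≠ 0
    intro h0
    have h1 : ∫ ω in E, φ ω ∂μ = 0 := by
      have : μ.restrict E = 0 := Measure.restrict_eq_zero.mpr h0
      simp [this]
    have h2 : ∫ ω in E, φ ω ∂μ + ∫ ω in Eᶜ, φ ω ∂μ = ∫ ω, φ ω ∂μ :=
      integral_add_compl' hE_m0 hφ_int
    have h3 : ∫ ω in Eᶜ, φ ω ∂μ = ∫ ω, (S n).indicator φ ω ∂μ := by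
      rw [hE_def, compl_compl, integral_indicator' μ (hSm n) φ]
    have h4 : ∫ ω, φ ω ∂μ = ∫ ω, nsq ω ∂μ := integral_condExp hG
    rw [h1, zero_add, h3, h4] at h2
    have := hn.trans_le (min_le_right _ _)
    rw [h2] at this
    exact lt_irrefl _ this
  · -- conditional second moment is the indicator
    have heq : (fun ω => ‖(r ω : ℂ) * f ω‖ ^ 2) = (fun ω => r ω ^ 2) * nsq := by
      funext ω
      simp only [Pi.mul_apply, norm_mul, hnsq_def, Complex.norm_real, Real.norm_eq_abs,
        mul_pow, sq_abs]
    have hsm2 : StronglyMeasurable[G] (fun ω => r ω ^ 2) :=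
      ((hr_measG.pow_const 2)).stronglyMeasurable
    have hbd2 : ∀ᵐ ω ∂μ, ‖r ω ^ 2‖ ≤ (n:ℝ)+1 := by
      refine ae_of_all _ fun ω => ?_
      rw [Real.norm_eq_abs, abs_of_nonneg (by positivity), hrsq ω]
      by_cases hω : ω ∈ E
      · rw [Set.indicator_of_mem hω]
        have h1 : ((n:ℝ)+1)⁻¹ ≤ φ ω := ((hE_mem ω).mp hω).1
        calc (φ ω)⁻¹ ≤ (((n:ℝ)+1)⁻¹)⁻¹ := inv_anti₀ (by positivity) h1
          _ = (n:ℝ)+1 := inv_inv _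
      · rw [Set.indicator_of_notMem hω]; positivity
    have hkey := condExp_stronglyMeasurable_mul_of_bound hG hsm2 hnsq_int ((n:ℝ)+1) hbd2
    rw [heq]
    refine hkey.trans (ae_of_all _ fun ω => ?_)
    simp only [Pi.mul_apply]
    exact hrsqφ ω
  · -- the approximation bound
    have hrnsq_int : Integrable (r * nsq) μ :=
      hnsq_int.bdd_mul (c := Real.sqrt ((n:ℝ)+1)) (hr_smG.mono hG).aestronglyMeasurable
        (ae_of_all _ fun ω => by simpa using hr_bound ω)
    have hkey := condExp_stronglyMeasurable_mul_of_bound hG hr_smG hnsq_int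
      (Real.sqrt ((n:ℝ)+1)) (ae_of_all _ fun ω => by simpa using hr_bound ω)
    -- pointwise identity for the integrand of the conditional expectation
    have heq2 : (fun ω => f ω * (starRingEnd ℂ) ((r ω : ℂ) * f ω)) =
        fun ω => (((r * nsq) ω : ℝ) : ℂ) := by
      funext ω
      simp only [Pi.mul_apply, map_mul, Complex.conj_ofReal, hnsq_def]
      push_cast
      rw [show (f ω * ((r ω : ℂ) * (starRingEnd ℂ) (f ω))) =
        (r ω : ℂ) * (f ω * (starRingEnd ℂ) (f ω)) by ring, Complex.mul_conj]
      rw [Complex.normSq_eq_norm_sq]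
      norm_cast
    have hF : (μ[fun ω' => f ω' * (starRingEnd ℂ) ((r ω' : ℂ) * f ω')|G]) =ᵐ[μ]
        fun ω => ((r ω * φ ω : ℝ) : ℂ) := by
      rw [heq2]
      refine (condexp_ofReal' hG hrnsq_int).trans ?_
      filter_upwards [hkey] with ω hω
      rw [hω]
      norm_cast
    have hfinal : (fun ω => f ω -
        (μ[fun ω' => f ω' * (starRingEnd ℂ) ((r ω' : ℂ) * f ω')|G]) ω * ((r ω : ℂ) * f ω))
        =ᵐ[μ] (S n).indicator f := by
      filter_upwards [hF] with ω hω
      rw [hω]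
      have : ((r ω * φ ω : ℝ) : ℂ) * ((r ω : ℂ) * f ω) = ((r ω ^ 2 * φ ω : ℝ) : ℂ) * f ω := by
        push_cast; ring
      rw [this, hrsqφ ω]
      by_cases hω' : ω ∈ E
      · rw [Set.indicator_of_mem hω', Set.indicator_of_notMem (by simpa [hE_def] using hω')]
        push_cast; ring
      · rw [Set.indicator_of_notMem hω',
          Set.indicator_of_mem (by simpa [hE_def] using hω')]
        push_cast; ring
    rw [eLpNorm_congr_ae hfinal]
    have hmem2 : MemLp ((S n).indicator f) 2 μ := hf.indicator (hSm n)
    rw [hmem2.eLpNorm_eq_integral_rpow_norm two_ne_zero ENNReal.ofNat_ne_top]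
    rw [ENNReal.ofReal_lt_ofReal_iff hε]
    have hi_eq : ∫ ω, ‖(S n).indicator f ω‖ ^ (2:ℝ≥0∞).toReal ∂μ
        = ∫ ω, (S n).indicator φ ω ∂μ := by
      have e1 : ∀ ω, ‖(S n).indicator f ω‖ ^ (2:ℝ≥0∞).toReal = (S n).indicator nsq ω := by
        intro ω
        by_cases hω : ω ∈ S n
        · rw [Set.indicator_of_mem hω, Set.indicator_of_mem hω]
          show ‖f ω‖ ^ (2:ℝ≥0∞).toReal = ‖f ω‖ ^ 2
          rw [ENNReal.toReal_ofNat, ← Real.rpow_natCast (‖f ω‖) 2]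
          norm_num
        · rw [Set.indicator_of_notMem hω, Set.indicator_of_notMem hω]
          simp [ENNReal.toReal_ofNat]
      rw [integral_congr_ae (ae_of_all _ e1)]
      rw [integral_indicator' μ (hSm n) nsq, integral_indicator' μ (hSm n) φ]
      exact (setIntegral_condExp hG hnsq_int (hSmG n)).symm
    rw [hi_eq]
    have hlt : ∫ ω, (S n).indicator φ ω ∂μ < ε ^ 2 := hn.trans_le (min_le_left _ _)
    have hnn : 0 ≤ ∫ ω, (S n).indicator φ ω ∂μ := by
      refine integral_nonneg_of_ae ?_
      filter_upwards [hφ_nonneg] with ω hω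
      exact Set.indicator_apply_nonneg fun _ => hω
    calc (∫ ω, (S n).indicator φ ω ∂μ) ^ (2:ℝ≥0∞).toReal⁻¹
        < (ε ^ 2) ^ (2:ℝ≥0∞).toReal⁻¹ := by
          apply Real.rpow_lt_rpow hnn hlt
          rw [ENNReal.toReal_ofNat]; norm_num
      _ = ε := by
          rw [ENNReal.toReal_ofNat, ← Real.rpow_natCast ε 2, ← Real.rpow_mul hε.le]
          norm_num
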